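/- Let T be a finite rooted tree where every internal vertex has exactly β ≥ 2 children. For u, v ∈ V(T), let d(v,u) be the graph distance from v to u if u is a descendant of v (including u = v, with distance 0), and minus the graph distance otherwise. Define Ext_T(F)(u) = Σ_{v ∈ V(T)} F(v) · β^{−max(0, d(v,u))}. Then for every F : V(T) → ℝ, the function Ext_T(F) is consistent: Ext_T(F)(v) = Σ_{u ∈ children(v)} Ext_T(F)(u) for every internal vertex v. -/

import Mathlib

open scoped BigOperators

/-- Vertex set of the complete β-ary rooted tree of depth `h`: words over `Fin β`
of length at most `h`. The root is `[]`; the children of an internal vertex `u`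
(one with `u.length < h`) are the words `u ++ [i]`, `i : Fin β`; `u` is a
descendant of `v` iff `v` is a prefix of `u`. -/
noncomputable def verts (β h : ℕ) : Finset (List (Fin β)) :=
  (Finset.range (h + 1)).biUnion fun k =>
    (Finset.univ : Finset (List.Vector (Fin β) k)).image Subtype.val

/-- The consistent extension `Ext_T(F)(u) = Σ_v F(v)·β^{-max(0,d(v,u))}`, where
`d(v,u)` is the signed tree distance: for `u` a descendant of `v` the weight is
`β^{-(graph distance)}`; for `u` a strict ancestor of `v` it is `β^0 = 1`
(as `max(0, d(v,u)) = 0` when `d(v,u) < 0`); incomparable vertices contribute 0. -/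
noncomputable def extT (β h : ℕ) (F : List (Fin β) → ℝ) (u : List (Fin β)) : ℝ :=
  ∑ v ∈ verts β h, F v *
    (if v <+: u then (β : ℝ) ^ (-((u.length : ℤ) - (v.length : ℤ)))
     else if u <+: v then 1 else 0)

/-- For every `F : V(T) → ℝ` the function `Ext_T(F)` is consistent: at every internal
vertex its value is the sum of the values at the children. -/
theorem stmt_4 (β h : ℕ) (hβ : 2 ≤ β) (F : List (Fin β) → ℝ)
    (u : List (Fin β)) (hu : u ∈ verts β h) (hlen : u.length < h) :
    extT β h F u = ∑ i : Fin β, extT β h F (u ++ [i]) := by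
  unfold extT
  rw [Finset.sum_comm]
  refine Finset.sum_congr rfl fun v _ => ?_
  rw [← Finset.mul_sum]
  congr 1
  have hβR : (β : ℝ) ≠ 0 := by positivity
  by_cases hv : v <+: u
  · have hvi : ∀ i : Fin β, v <+: u ++ [i] := fun i => hv.trans (List.prefix_append u [i])
    simp only [if_pos hv, hvi, if_pos, List.length_append, List.length_singleton]
    rw [Finset.sum_const, Finset.card_univ, Fintype.card_fin, nsmul_eq_mul]
    have : (-(((u.length : ℤ) + 1) - v.length)) = (-((u.length : ℤ) - v.length)) + (-1) := by ring
    rw [Nat.cast_add, Nat.cast_one, this, zpow_add₀ hβR, zpow_neg_one]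
    field_simp
  · by_cases hu : u <+: v
    · obtain ⟨t, ht⟩ := hu
      have htne : t ≠ [] := by
        rintro rfl; exact hv (by simp [← ht])
      obtain ⟨i, w, rfl⟩ := List.exists_cons_of_ne_nil htne
      rw [if_neg hv, if_pos ⟨i :: w, ht⟩]
      have key : ∀ j : Fin β,
          (if v <+: u ++ [j] then (β : ℝ) ^ (-(((u ++ [j]).length : ℤ) - v.length))
           else if u ++ [j] <+: v then 1 else 0) = if j = i then 1 else 0 := by
        intro j
        by_cases hji : j = i
        · subst hji
          rcases w.eq_nil_or_concat with rfl | ⟨w', a, rfl⟩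
          · have hpref : v <+: u ++ [j] := ht ▸ List.prefix_rfl
            rw [if_pos hpref]; simp [← ht]
          · have h1 : ¬ v <+: u ++ [j] := by
              intro hp
              rcases List.prefix_concat_iff.mp hp with h | h
              · apply_fun List.length at h
                simp [← ht] at h
              · exact hv h
            have h2 : u ++ [j] <+: v := ⟨w' ++ [a], by rw [← ht]; simp⟩
            rw [if_neg h1, if_pos h2, if_pos rfl]
        · have h1 : ¬ v <+: u ++ [j] := by
            intro hp
            rcases List.prefix_concat_iff.mp hp with hcase | hcase
            · rw [← ht] at hcase
              simp at hcase
              exact hji hcase.1.symm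
            · exact hv hcase
          have h2 : ¬ u ++ [j] <+: v := by
            rintro ⟨s, hs⟩
            have h3 : u ++ j :: s = u ++ i :: w := by simpa using hs.trans ht.symm
            have := List.append_cancel_left h3
            injection this with h4 _
            exact hji h4
          rw [if_neg h1, if_neg h2, if_neg hji]
      simp only [key]
      simp
    · rw [if_neg hv, if_neg hu]
      refine (Finset.sum_eq_zero fun j _ => ?_).symm
      have h1 : ¬ v <+: u ++ [j] := by
        intro hp
        rcases List.prefix_concat_iff.mp hp with h | h
        · exact hu (h ▸ List.prefix_append u [j])
        · exact hv h
      have h2 : ¬ u ++ [j] <+: v := fun hp => hu ((List.prefix_append u [j]).trans hp)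
      rw [if_neg h1, if_neg h2]
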